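/- The simple graph G on vertex set {1,2,3,4,5,6,7} with edge set {{1,2},{1,4},{2,3},{2,4},{2,5},{3,4},{3,6},{3,7},{4,5},{5,6},{5,7},{6,7}} (graph number 990 in the Atlas of Graphs) has minimum rank 3 over the real numbers. -/

import Mathlib

open Matrix


/-- Edge list of graph number 990 in the Atlas of Graphs (vertices 1..7). -/
def atlas990Edges : List (ℕ × ℕ) := [(1,2),(1,4),(2,3),(2,4),(2,5),(3,4),(3,6),(3,7),(4,5),(5,6),(5,7),(6,7)]

@[simp]
lemma cons_val_five' {α : Type*} {m : ℕ} (x : α) (u : Fin (m+5) → α) :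
    Matrix.vecCons x u 5 = Matrix.vecHead (Matrix.vecTail (Matrix.vecTail (Matrix.vecTail (Matrix.vecTail u)))) :=
  rfl

@[simp]
lemma cons_val_six' {α : Type*} {m : ℕ} (x : α) (u : Fin (m+6) → α) :
    Matrix.vecCons x u 6 = Matrix.vecHead (Matrix.vecTail (Matrix.vecTail (Matrix.vecTail (Matrix.vecTail (Matrix.vecTail u))))) :=
  rfl

/-- Rank of an arbitrary (rectangular index) submatrix is at most the rank. -/
lemma rank_submatrix_le' (A : Matrix (Fin 7) (Fin 7) ℝ) (f g : Fin 3 → Fin 7) :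
    (A.submatrix f g).rank ≤ A.rank := by
  have h : A.submatrix f g =
      ((1 : Matrix (Fin 7) (Fin 7) ℝ).submatrix f (Equiv.refl _)) * A *
        ((1 : Matrix (Fin 7) (Fin 7) ℝ).submatrix (Equiv.refl _) g) := by
    rw [Matrix.one_submatrix_mul, Matrix.mul_submatrix_one]
    simp [Matrix.submatrix_submatrix]
  rw [h]
  exact le_trans (Matrix.rank_mul_le_left _ _) (Matrix.rank_mul_le_right _ _)

/-- If a 3×3 submatrix has nonzero determinant, the rank is at least 3. -/
lemma three_le_rank_of_minor (A : Matrix (Fin 7) (Fin 7) ℝ) (f g : Fin 3 → Fin 7)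
    (h : (A.submatrix f g).det ≠ 0) : 3 ≤ A.rank := by
  have hu : IsUnit (A.submatrix f g) := by
    rw [Matrix.isUnit_iff_isUnit_det]
    exact isUnit_iff_ne_zero.mpr h
  have := Matrix.rank_of_isUnit _ hu
  calc (3 : ℕ) = (A.submatrix f g).rank := by rw [this]; simp
    _ ≤ A.rank := rank_submatrix_le' A f g

def atlasB : Matrix (Fin 3) (Fin 7) ℝ :=
  !![1,1,0,1,0,0,0; 0,1,1,1,1,0,0; 0,0,1,0,-1,1,1]

def atlasC : Matrix (Fin 7) (Fin 7) ℝ :=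
  !![1,1,0,1,0,0,0;
     1,2,1,2,1,0,0;
     0,1,2,1,0,1,1;
     1,2,1,2,1,0,0;
     0,1,0,1,2,-1,-1;
     0,0,1,0,-1,1,1;
     0,0,1,0,-1,1,1]

lemma atlasC_eq : atlasC = atlasBᵀ * atlasB := by
  ext i j
  fin_cases i <;> fin_cases j <;>
    simp [atlasC, atlasB, Matrix.mul_apply, Fin.sum_univ_succ, Matrix.vecHead, Matrix.vecTail] <;> norm_num

/-- Graph number 990 in the Atlas of Graphs has minimum rank 3 over the reals:
3 is the least element of the set of ranks of real symmetric 7×7 matrices whose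
off-diagonal zero/nonzero pattern matches the edges of the graph. -/
theorem atlas990_minRank_eq_three :
    IsLeast {r : ℕ | ∃ A : Matrix (Fin 7) (Fin 7) ℝ, A.IsSymm ∧
        (∀ i j : Fin 7, i ≠ j →
          (A i j ≠ 0 ↔
            ((i.val + 1, j.val + 1) ∈ atlas990Edges ∨
             (j.val + 1, i.val + 1) ∈ atlas990Edges))) ∧
        A.rank = r} 3 := by
  constructor
  · -- membership: atlasC has the right pattern and rank 3
    refine ⟨atlasC, ?_, ?_, ?_⟩
    · rw [atlasC_eq]
      rw [Matrix.IsSymm, Matrix.transpose_mul, Matrix.transpose_transpose]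
    · intro i j hij
      fin_cases i <;> fin_cases j <;>
        simp_all [atlasC, atlas990Edges, Matrix.vecHead, Matrix.vecTail] <;> norm_num
    · have h1 : atlasC.rank ≤ 3 := by
        rw [atlasC_eq]
        exact le_trans (Matrix.rank_mul_le_right _ _)
          (le_trans (Matrix.rank_le_card_height atlasB) (by norm_num))
      have h2 : 3 ≤ atlasC.rank := by
        apply three_le_rank_of_minor atlasC ![0,1,4] ![1,4,5]
        have : atlasC.submatrix ![0,1,4] ![1,4,5] = !![1,0,0; 2,1,0; 1,2,-1] := by
          ext i j
          fin_cases i <;> fin_cases j <;> simp [atlasC, Matrix.vecHead, Matrix.vecTail]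
        rw [this, Matrix.det_fin_three]
        simp [Matrix.vecHead, Matrix.vecTail]
      omega
  · -- lower bound
    rintro r ⟨A, _, hpat, rfl⟩
    have h01 : A 0 1 ≠ 0 := (hpat 0 1 (by decide)).mpr (by decide)
    have h14 : A 1 4 ≠ 0 := (hpat 1 4 (by decide)).mpr (by decide)
    have h45 : A 4 5 ≠ 0 := (hpat 4 5 (by decide)).mpr (by decide)
    have h04 : A 0 4 = 0 := by
      by_contra h; exact absurd ((hpat 0 4 (by decide)).mp h) (by decide)
    have h05 : A 0 5 = 0 := by
      by_contra h; exact absurd ((hpat 0 5 (by decide)).mp h) (by decide)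
    have h15 : A 1 5 = 0 := by
      by_contra h; exact absurd ((hpat 1 5 (by decide)).mp h) (by decide)
    apply three_le_rank_of_minor A ![0,1,4] ![1,4,5]
    have : A.submatrix ![0,1,4] ![1,4,5] =
        !![A 0 1, 0, 0; A 1 1, A 1 4, 0; A 4 1, A 4 4, A 4 5] := by
      ext i j
      fin_cases i <;> fin_cases j <;> simp [h04, h05, h15, Matrix.vecHead, Matrix.vecTail]
    rw [this, Matrix.det_fin_three]
    have e : ∀ x y z u v w : ℝ,
        (!![x, 0, 0; y, z, 0; u, v, w] : Matrix (Fin 3) (Fin 3) ℝ) 0 0 *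
              !![x, 0, 0; y, z, 0; u, v, w] 1 1 * !![x, 0, 0; y, z, 0; u, v, w] 2 2 -
            !![x, 0, 0; y, z, 0; u, v, w] 0 0 * !![x, 0, 0; y, z, 0; u, v, w] 1 2 *
              !![x, 0, 0; y, z, 0; u, v, w] 2 1 -
            !![x, 0, 0; y, z, 0; u, v, w] 0 1 * !![x, 0, 0; y, z, 0; u, v, w] 1 0 *
              !![x, 0, 0; y, z, 0; u, v, w] 2 2 +
            !![x, 0, 0; y, z, 0; u, v, w] 0 1 * !![x, 0, 0; y, z, 0; u, v, w] 1 2 *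
              !![x, 0, 0; y, z, 0; u, v, w] 2 0 +
            !![x, 0, 0; y, z, 0; u, v, w] 0 2 * !![x, 0, 0; y, z, 0; u, v, w] 1 0 *
              !![x, 0, 0; y, z, 0; u, v, w] 2 1 -
            !![x, 0, 0; y, z, 0; u, v, w] 0 2 * !![x, 0, 0; y, z, 0; u, v, w] 1 1 *
              !![x, 0, 0; y, z, 0; u, v, w] 2 0 = x * z * w := by
      intro x y z u v w
      simp [Matrix.vecHead, Matrix.vecTail]
    rw [e]
    exact mul_ne_zero (mul_ne_zero h01 h14) h45
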